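/- Let λ ∈ ℝ \ {0} and let f : Ω → ℝ be a regular c_λ-convex function on a nonempty open convex set Ω ⊂ ℝ^d, with Ω' = ∇^{c_λ} f(Ω) and f^{c_λ} its c_λ-conjugate regarded as a function on Ω'. Then f^{c_λ} is differentiable on Ω', for every v ∈ Ω' one has 1 − λ ∇f^{c_λ}(v)·v > 0, and the map v ↦ ∇f^{c_λ}(v)/(1 − λ ∇f^{c_λ}(v)·v) is the inverse of ∇^{c_λ} f; that is, for all u ∈ Ω, ∇^{c_λ} f^{c_λ}(∇^{c_λ} f(u)) = u. -/

import Mathlib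

open MeasureTheory Real
open scoped RealInnerProductSpace ENNReal BigOperators

noncomputable section

/-- The negative logarithmic cost `-c_λ(u,v) = (1/λ)·log(1 + λ u·v)`, valued in `EReal`,
with the convention `log t = -∞` for `t ≤ 0` (so that `(1/λ)·(-∞) = -∞` for `λ > 0` and
`= +∞` for `λ < 0`). -/
def negCost {d : ℕ} (lam : ℝ) (u v : EuclideanSpace ℝ (Fin d)) : EReal :=
  if 0 < 1 + lam * ⟪u, v⟫ then (((1 / lam) * Real.log (1 + lam * ⟪u, v⟫) : ℝ) : EReal)
  else if 0 < lam then ⊥ else ⊤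

/-- The `c_λ`-conjugate `f^{c_λ}(v) = sup_{u ∈ Ω} { (1/λ)·log(1 + λ u·v) − f(u) }`. -/
def lamConj {d : ℕ} (lam : ℝ) (Ω : Set (EuclideanSpace ℝ (Fin d)))
    (f : EuclideanSpace ℝ (Fin d) → ℝ) (v : EuclideanSpace ℝ (Fin d)) : EReal :=
  ⨆ u ∈ Ω, (negCost lam u v - ((f u : ℝ) : EReal))

/-- The `λ`-gradient (deformed Legendre transform) `∇^{c_λ} f(u) = ∇f(u)/(1 − λ ∇f(u)·u)`. -/
def lamGrad {d : ℕ} (lam : ℝ) (f : EuclideanSpace ℝ (Fin d) → ℝ)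
    (u : EuclideanSpace ℝ (Fin d)) : EuclideanSpace ℝ (Fin d) :=
  (1 - lam * ⟪gradient f u, u⟫)⁻¹ • gradient f u

/-- A regular `c_λ`-convex function: `f` smooth on a nonempty open convex `Ω`, the Hessian of
`F_λ = (1/λ)(e^{λ f} − 1)` strictly positive definite on `Ω`, and `1 − λ ∇f(u)·u > 0` on `Ω`. -/
def IsRegularCConvex {d : ℕ} (lam : ℝ) (Ω : Set (EuclideanSpace ℝ (Fin d)))
    (f : EuclideanSpace ℝ (Fin d) → ℝ) : Prop :=
  Ω.Nonempty ∧ IsOpen Ω ∧ Convex ℝ Ω ∧ ContDiffOn ℝ (⊤ : ℕ∞) f Ω ∧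
    (∀ u ∈ Ω, ∀ w : EuclideanSpace ℝ (Fin d), w ≠ 0 →
      0 < ⟪fderiv ℝ (gradient fun z => (1 / lam) * (Real.exp (lam * f z) - 1)) u w, w⟫) ∧
    ∀ u ∈ Ω, 0 < 1 - lam * ⟪gradient f u, u⟫

section AuxLemmas

open InnerProductSpace

variable {d : ℕ}

lemma hasGradientAt_Flam {lam : ℝ} (hlam : lam ≠ 0) {f : EuclideanSpace ℝ (Fin d) → ℝ}
    {u : EuclideanSpace ℝ (Fin d)} (hf : HasGradientAt f (gradient f u) u) :
    HasGradientAt (fun z => (1 / lam) * (Real.exp (lam * f z) - 1))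
      (Real.exp (lam * f u) • gradient f u) u := by
  have hfF : HasFDerivAt f (toDual ℝ _ (gradient f u)) u := hf.hasFDerivAt
  have h1 : HasDerivAt (fun t : ℝ => lam * t) lam (f u) := by
    simpa using (hasDerivAt_id (f u)).const_mul lam
  have h2 : HasDerivAt (fun t : ℝ => (1 / lam) * (Real.exp (lam * t) - 1))
      (Real.exp (lam * f u)) (f u) := by
    have h2' := (((Real.hasDerivAt_exp (lam * f u)).comp (f u) h1).sub_const 1).const_mul (1 / lam)
    refine h2'.congr_deriv ?_
    field_simp
  have h3 := h2.comp_hasFDerivAt u hfF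
  rw [hasGradientAt_iff_hasFDerivAt]
  refine h3.congr_fderiv ?_
  ext w
  simp [ContinuousLinearMap.smul_apply, toDual_apply_apply, real_inner_smul_left]

lemma gradient_contDiffOn {Ω : Set (EuclideanSpace ℝ (Fin d))}
    {F : EuclideanSpace ℝ (Fin d) → ℝ}
    (hΩ : IsOpen Ω) (hF : ContDiffOn ℝ (⊤ : ℕ∞) F Ω) :
    ContDiffOn ℝ (⊤ : ℕ∞) (gradient F) Ω := by
  have h1 : ContDiffOn ℝ (⊤ : ℕ∞) (fderiv ℝ F) Ω := hF.fderiv_of_isOpen hΩ (mod_cast le_top)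
  let L : (EuclideanSpace ℝ (Fin d) →L[ℝ] ℝ) →ₗ[ℝ] EuclideanSpace ℝ (Fin d) :=
    { toFun := fun φ => (toDual ℝ (EuclideanSpace ℝ (Fin d))).symm φ
      map_add' := fun x y => by simp
      map_smul' := fun c x => by
        simp [LinearIsometryEquiv.map_smulₛₗ, starRingEnd_apply] }
  exact h1.continuousLinearMap_comp (LinearMap.toContinuousLinearMap L)

lemma strict_grad_ineq {Ω : Set (EuclideanSpace ℝ (Fin d))}
    {F : EuclideanSpace ℝ (Fin d) → ℝ}
    (hΩ : IsOpen Ω) (hconv : Convex ℝ Ω) (hF : ContDiffOn ℝ (⊤ : ℕ∞) F Ω)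
    (hH : ∀ u ∈ Ω, ∀ w : EuclideanSpace ℝ (Fin d), w ≠ 0 →
      0 < ⟪fderiv ℝ (gradient F) u w, w⟫)
    {u u' : EuclideanSpace ℝ (Fin d)} (hu : u ∈ Ω) (hu' : u' ∈ Ω) (hne : u ≠ u') :
    F u' + ⟪gradient F u', u - u'⟫ < F u := by
  set b := gradient F with hbdef
  have hw : u - u' ≠ 0 := sub_ne_zero.mpr hne
  set w : EuclideanSpace ℝ (Fin d) := u - u' with hwdef
  set γ : ℝ → EuclideanSpace ℝ (Fin d) := fun t => u' + t • w with hγdef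
  have hγΩ : ∀ t ∈ Set.Icc (0:ℝ) 1, γ t ∈ Ω := fun t ht => hconv.add_smul_sub_mem hu' hu ht
  have hFd : ∀ z ∈ Ω, HasGradientAt F (b z) z := fun z hz =>
    ((hF.contDiffAt (hΩ.mem_nhds hz)).differentiableAt (by simp)).hasGradientAt
  have hbCD : ContDiffOn ℝ (⊤ : ℕ∞) b Ω := gradient_contDiffOn hΩ hF
  have hbd : ∀ z ∈ Ω, HasFDerivAt b (fderiv ℝ b z) z := fun z hz =>
    ((hbCD.contDiffAt (hΩ.mem_nhds hz)).differentiableAt (by simp)).hasFDerivAt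
  have hγd : ∀ t : ℝ, HasDerivAt γ w t := fun t => by
    simpa [hγdef] using ((hasDerivAt_id t).smul_const w).const_add u'
  have hhd : ∀ t ∈ Set.Icc (0:ℝ) 1, HasDerivAt (fun s => F (γ s)) ⟪b (γ t), w⟫ t := by
    intro t ht
    have h1 := (hFd _ (hγΩ t ht)).hasFDerivAt.comp_hasDerivAt t (hγd t)
    simp only [toDual_apply_apply] at h1
    exact h1
  have hφd : ∀ t ∈ Set.Icc (0:ℝ) 1,
      HasDerivAt (fun s => ⟪b (γ s), w⟫) ⟪fderiv ℝ b (γ t) w, w⟫ t := by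
    intro t ht
    have h1 : HasDerivAt (fun s => b (γ s)) (fderiv ℝ b (γ t) w) t :=
      (hbd _ (hγΩ t ht)).comp_hasDerivAt t (hγd t)
    have h2 := ((toDual ℝ (EuclideanSpace ℝ (Fin d)) w).hasFDerivAt).comp_hasDerivAt t h1
    have h3 : (fun s => ⟪b (γ s), w⟫_ℝ) = (⇑(toDual ℝ (EuclideanSpace ℝ (Fin d)) w) ∘ fun s => b (γ s)) := by
      funext s
      rw [Function.comp_apply, toDual_apply_apply, real_inner_comm]
    rw [h3, show ⟪fderiv ℝ b (γ t) w, w⟫_ℝ = (toDual ℝ (EuclideanSpace ℝ (Fin d)) w) (fderiv ℝ b (γ t) w) by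
      rw [toDual_apply_apply, real_inner_comm]]
    exact h2
  have hφmono : StrictMonoOn (fun s => ⟪b (γ s), w⟫) (Set.Icc (0:ℝ) 1) := by
    apply strictMonoOn_of_deriv_pos (convex_Icc 0 1)
    · exact fun t ht => ((hφd t ht).continuousAt).continuousWithinAt
    · intro t ht
      rw [interior_Icc] at ht
      rw [(hφd t (Set.mem_Icc_of_Ioo ht)).deriv]
      exact hH _ (hγΩ t (Set.mem_Icc_of_Ioo ht)) w hw
  obtain ⟨c, hc, hceq⟩ := exists_hasDerivAt_eq_slope (fun s => F (γ s))
    (fun s => ⟪b (γ s), w⟫) one_pos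
    (fun t ht => (hhd t ht).continuousAt.continuousWithinAt)
    (fun t ht => hhd t (Set.mem_Icc_of_Ioo ht))
  have h0c : ⟪b (γ 0), w⟫ < ⟪b (γ c), w⟫ :=
    hφmono (Set.left_mem_Icc.mpr zero_le_one) (Set.mem_Icc_of_Ioo hc) hc.1
  have hγ0 : γ 0 = u' := by simp [hγdef]
  have hγ1 : γ 1 = u := by simp [hγdef, hwdef]
  rw [hceq, hγ0, hγ1] at h0c
  rw [show (1:ℝ) - 0 = 1 by norm_num, div_one] at h0c
  linarith [h0c]

end AuxLemmas

section Key

open InnerProductSpace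

variable {d : ℕ} {lam : ℝ} {Ω : Set (EuclideanSpace ℝ (Fin d))}
  {f : EuclideanSpace ℝ (Fin d) → ℝ}
lemma one_add_lam_inner (hlam : lam ≠ 0) {u' : EuclideanSpace ℝ (Fin d)}
    (hs : 0 < 1 - lam * ⟪gradient f u', u'⟫) (u : EuclideanSpace ℝ (Fin d)) :
    1 + lam * ⟪u, lamGrad lam f u'⟫ =
      (1 + lam * ⟪gradient f u', u - u'⟫) / (1 - lam * ⟪gradient f u', u'⟫) := by
  have hsne : 1 - lam * ⟪gradient f u', u'⟫ ≠ 0 := ne_of_gt hs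
  rw [lamGrad, real_inner_smul_right, inner_sub_right,
    real_inner_comm u (gradient f u')]
  generalize ⟪gradient f u', u⟫_ℝ = A at *
  generalize hB : ⟪gradient f u', u'⟫_ℝ = B at *
  field_simp
  ring

/-- self-value identity: `1 + λ⟪u, ∇^λf(u)⟫ = s(u)⁻¹`. -/
lemma one_add_self (hlam : lam ≠ 0) {u : EuclideanSpace ℝ (Fin d)}
    (hs : 0 < 1 - lam * ⟪gradient f u, u⟫) :
    1 + lam * ⟪u, lamGrad lam f u⟫ = (1 - lam * ⟪gradient f u, u⟫)⁻¹ := by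
  rw [one_add_lam_inner hlam hs u]
  rw [sub_self, inner_zero_right, mul_zero, add_zero, one_div]

lemma selfval (hlam : lam ≠ 0) {u : EuclideanSpace ℝ (Fin d)}
    (hs : 0 < 1 - lam * ⟪gradient f u, u⟫) :
    (1 / lam) * Real.log (1 + lam * ⟪u, lamGrad lam f u⟫) - f u =
      -(1 / lam) * Real.log (1 - lam * ⟪gradient f u, u⟫) - f u := by
  rw [one_add_self hlam hs, Real.log_inv]
  ring

lemma term_lt (hlam : lam ≠ 0) {u u' : EuclideanSpace ℝ (Fin d)}
    (hs' : 0 < 1 - lam * ⟪gradient f u', u'⟫)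
    (hkey : ⟪gradient f u', u - u'⟫ < (Real.exp (lam * (f u - f u')) - 1) / lam)
    (hN : 0 < 1 + lam * ⟪u, lamGrad lam f u'⟫) :
    (1 / lam) * Real.log (1 + lam * ⟪u, lamGrad lam f u'⟫) - f u <
      -(1 / lam) * Real.log (1 - lam * ⟪gradient f u', u'⟫) - f u' := by
  have hIP := one_add_lam_inner hlam hs' u
  set s := 1 - lam * ⟪gradient f u', u'⟫ with hsdef
  set N := 1 + lam * ⟪u, lamGrad lam f u'⟫ with hNdef
  set E1 := Real.exp (lam * (f u - f u')) with hE1def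
  have hE1pos : 0 < E1 := Real.exp_pos _
  set P := 1 + lam * ⟪gradient f u', u - u'⟫ with hPdef
  have hlog : Real.log (E1 / s) = lam * (f u - f u') - Real.log s := by
    rw [Real.log_div (ne_of_gt hE1pos) (ne_of_gt hs'), Real.log_exp]
  suffices h : (1 / lam) * Real.log N < (1 / lam) * (lam * (f u - f u') - Real.log s) by
    have heq : (1 / lam) * (lam * (f u - f u') - Real.log s) =
        (f u - f u') - (1 / lam) * Real.log s := by
      field_simp
    rw [heq] at h
    linarith
  rw [← hlog]
  rcases hlam.lt_or_gt with hneg | hpos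
  · have hcan : lam * ((E1 - 1) / lam) = E1 - 1 := by field_simp
    have h1 : lam * ((E1 - 1) / lam) < lam * ⟪gradient f u', u - u'⟫ :=
      mul_lt_mul_of_neg_left hkey hneg
    rw [hcan] at h1
    have hP : E1 < P := by rw [hPdef]; linarith
    have hN' : E1 / s < N := by rw [hIP]; gcongr
    exact mul_lt_mul_of_neg_left (Real.log_lt_log (div_pos hE1pos hs') hN')
      (by simpa using one_div_neg.mpr hneg)
  · have hcan : lam * ((E1 - 1) / lam) = E1 - 1 := by field_simp
    have h1 : lam * ⟪gradient f u', u - u'⟫ < lam * ((E1 - 1) / lam) :=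
      mul_lt_mul_of_pos_left hkey hpos
    rw [hcan] at h1
    have hP : P < E1 := by rw [hPdef]; linarith
    have hN' : N < E1 / s := by rw [hIP]; gcongr
    exact mul_lt_mul_of_pos_left (Real.log_lt_log hN hN') (one_div_pos.mpr hpos)

lemma N_pos_of_neg (hneg : lam < 0) {u u' : EuclideanSpace ℝ (Fin d)}
    (hs' : 0 < 1 - lam * ⟪gradient f u', u'⟫)
    (hkey : ⟪gradient f u', u - u'⟫ ≤ (Real.exp (lam * (f u - f u')) - 1) / lam) :
    0 < 1 + lam * ⟪u, lamGrad lam f u'⟫ := by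
  have hlam : lam ≠ 0 := ne_of_lt hneg
  rw [one_add_lam_inner hlam hs' u]
  have hE1pos : 0 < Real.exp (lam * (f u - f u')) := Real.exp_pos _
  have hcan : lam * ((Real.exp (lam * (f u - f u')) - 1) / lam) =
      Real.exp (lam * (f u - f u')) - 1 := by field_simp
  have h1 := mul_le_mul_of_nonpos_left hkey (le_of_lt hneg)
  rw [hcan] at h1
  have : 0 < 1 + lam * ⟪gradient f u', u - u'⟫ := by linarith
  positivity

lemma key_ineq (hlam : lam ≠ 0) (hΩ : IsOpen Ω) (hconv : Convex ℝ Ω)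
    (hf : ContDiffOn ℝ (⊤ : ℕ∞) f Ω)
    (hH : ∀ u ∈ Ω, ∀ w : EuclideanSpace ℝ (Fin d), w ≠ 0 →
      0 < ⟪fderiv ℝ (gradient fun z => (1 / lam) * (Real.exp (lam * f z) - 1)) u w, w⟫)
    {u u' : EuclideanSpace ℝ (Fin d)} (hu : u ∈ Ω) (hu' : u' ∈ Ω) (hne : u ≠ u') :
    ⟪gradient f u', u - u'⟫ < (Real.exp (lam * (f u - f u')) - 1) / lam := by
  set F : EuclideanSpace ℝ (Fin d) → ℝ := fun z => (1 / lam) * (Real.exp (lam * f z) - 1)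
    with hFdef
  have hFCD : ContDiffOn ℝ (⊤ : ℕ∞) F Ω :=
    contDiffOn_const.mul (((contDiffOn_const.mul hf).exp).sub contDiffOn_const)
  have hgradF : ∀ z ∈ Ω, gradient F z = Real.exp (lam * f z) • gradient f z := fun z hz =>
    (hasGradientAt_Flam hlam
      ((hf.contDiffAt (hΩ.mem_nhds hz)).differentiableAt (by simp)).hasGradientAt).gradient
  have h := strict_grad_ineq hΩ hconv hFCD hH hu hu' hne
  rw [hgradF u' hu', real_inner_smul_left] at h
  have he' : 0 < Real.exp (lam * f u') := Real.exp_pos _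
  have hid : (Real.exp (lam * (f u - f u')) - 1) / lam = (F u - F u') / Real.exp (lam * f u') := by
    have hFu : F u = 1 / lam * (Real.exp (lam * f u) - 1) := rfl
    have hFu' : F u' = 1 / lam * (Real.exp (lam * f u') - 1) := rfl
    rw [hFu, hFu', mul_sub, Real.exp_sub]
    have hB : Real.exp (lam * f u') ≠ 0 := ne_of_gt (Real.exp_pos _)
    rw [div_eq_div_iff hlam hB]
    field_simp
    ring
  rw [hid, lt_div_iff₀ he']
  linarith [h]

lemma key_le (hlam : lam ≠ 0) (hΩ : IsOpen Ω) (hconv : Convex ℝ Ω)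
    (hf : ContDiffOn ℝ (⊤ : ℕ∞) f Ω)
    (hH : ∀ u ∈ Ω, ∀ w : EuclideanSpace ℝ (Fin d), w ≠ 0 →
      0 < ⟪fderiv ℝ (gradient fun z => (1 / lam) * (Real.exp (lam * f z) - 1)) u w, w⟫)
    {u u' : EuclideanSpace ℝ (Fin d)} (hu : u ∈ Ω) (hu' : u' ∈ Ω) :
    ⟪gradient f u', u - u'⟫ ≤ (Real.exp (lam * (f u - f u')) - 1) / lam := by
  rcases eq_or_ne u u' with rfl | hne
  · simp
  · exact le_of_lt (key_ineq hlam hΩ hconv hf hH hu hu' hne)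

/-- the term in the supremum defining `lamConj`, evaluated at the base point. -/
lemma term_self (hlam : lam ≠ 0) {u' : EuclideanSpace ℝ (Fin d)}
    (hs' : 0 < 1 - lam * ⟪gradient f u', u'⟫) :
    negCost lam u' (lamGrad lam f u') - ((f u' : ℝ) : EReal) =
      ((-(1 / lam) * Real.log (1 - lam * ⟪gradient f u', u'⟫) - f u' : ℝ) : EReal) := by
  have hN : 0 < 1 + lam * ⟪u', lamGrad lam f u'⟫ := by
    rw [one_add_self hlam hs']
    positivity
  rw [negCost, if_pos hN, ← EReal.coe_sub, EReal.coe_eq_coe_iff]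
  exact selfval hlam hs'

lemma term_le (hlam : lam ≠ 0) (hΩ : IsOpen Ω) (hconv : Convex ℝ Ω)
    (hf : ContDiffOn ℝ (⊤ : ℕ∞) f Ω)
    (hH : ∀ u ∈ Ω, ∀ w : EuclideanSpace ℝ (Fin d), w ≠ 0 →
      0 < ⟪fderiv ℝ (gradient fun z => (1 / lam) * (Real.exp (lam * f z) - 1)) u w, w⟫)
    {u' : EuclideanSpace ℝ (Fin d)} (hu' : u' ∈ Ω)
    (hs' : 0 < 1 - lam * ⟪gradient f u', u'⟫) {u : EuclideanSpace ℝ (Fin d)} (hu : u ∈ Ω) :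
    negCost lam u (lamGrad lam f u') - ((f u : ℝ) : EReal) ≤
      ((-(1 / lam) * Real.log (1 - lam * ⟪gradient f u', u'⟫) - f u' : ℝ) : EReal) := by
  rcases eq_or_ne u u' with rfl | hne
  · exact le_of_eq (term_self hlam hs')
  · by_cases hN : 0 < 1 + lam * ⟪u, lamGrad lam f u'⟫
    · rw [negCost, if_pos hN, ← EReal.coe_sub, EReal.coe_le_coe_iff]
      exact le_of_lt (term_lt hlam hs' (key_ineq hlam hΩ hconv hf hH hu hu' hne) hN)
    · rcases hlam.lt_or_gt with hneg | hpos
      · exact absurd (N_pos_of_neg hneg hs'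
          (key_le hlam hΩ hconv hf hH hu hu')) hN
      · rw [negCost, if_neg hN, if_pos hpos, EReal.bot_sub]
        exact bot_le

lemma lamConj_eq (hlam : lam ≠ 0) (hΩ : IsOpen Ω) (hconv : Convex ℝ Ω)
    (hf : ContDiffOn ℝ (⊤ : ℕ∞) f Ω)
    (hH : ∀ u ∈ Ω, ∀ w : EuclideanSpace ℝ (Fin d), w ≠ 0 →
      0 < ⟪fderiv ℝ (gradient fun z => (1 / lam) * (Real.exp (lam * f z) - 1)) u w, w⟫)
    {u' : EuclideanSpace ℝ (Fin d)} (hu' : u' ∈ Ω)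
    (hs' : 0 < 1 - lam * ⟪gradient f u', u'⟫) :
    lamConj lam Ω f (lamGrad lam f u') =
      ((-(1 / lam) * Real.log (1 - lam * ⟪gradient f u', u'⟫) - f u' : ℝ) : EReal) := by
  apply le_antisymm
  · exact iSup₂_le fun u hu => term_le hlam hΩ hconv hf hH hu' hs' hu
  · rw [← term_self hlam hs']
    exact le_iSup₂ (f := fun u (_ : u ∈ Ω) => negCost lam u (lamGrad lam f u') -
      ((f u : ℝ) : EReal)) u' hu'

lemma lamGrad_injOn (hlam : lam ≠ 0) (hΩ : IsOpen Ω) (hconv : Convex ℝ Ω)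
    (hf : ContDiffOn ℝ (⊤ : ℕ∞) f Ω)
    (hH : ∀ u ∈ Ω, ∀ w : EuclideanSpace ℝ (Fin d), w ≠ 0 →
      0 < ⟪fderiv ℝ (gradient fun z => (1 / lam) * (Real.exp (lam * f z) - 1)) u w, w⟫)
    (hs : ∀ u ∈ Ω, 0 < 1 - lam * ⟪gradient f u, u⟫)
    {u u' : EuclideanSpace ℝ (Fin d)} (hu : u ∈ Ω) (hu' : u' ∈ Ω)
    (heq : lamGrad lam f u = lamGrad lam f u') : u = u' := by
  by_contra hne
  have hNu : 0 < 1 + lam * ⟪u, lamGrad lam f u⟫ := by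
    rw [one_add_self hlam (hs u hu)]; exact inv_pos.mpr (hs u hu)
  have hNu' : 0 < 1 + lam * ⟪u', lamGrad lam f u'⟫ := by
    rw [one_add_self hlam (hs u' hu')]; exact inv_pos.mpr (hs u' hu')
  have h1 : (1 / lam) * Real.log (1 + lam * ⟪u, lamGrad lam f u'⟫) - f u <
      -(1 / lam) * Real.log (1 - lam * ⟪gradient f u', u'⟫) - f u' :=
    term_lt hlam (hs u' hu') (key_ineq hlam hΩ hconv hf hH hu hu' hne) (by rw [← heq]; exact hNu)
  have h2 : (1 / lam) * Real.log (1 + lam * ⟪u', lamGrad lam f u⟫) - f u' <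
      -(1 / lam) * Real.log (1 - lam * ⟪gradient f u, u⟫) - f u :=
    term_lt hlam (hs u hu) (key_ineq hlam hΩ hconv hf hH hu' hu (Ne.symm hne)) (by rw [heq]; exact hNu')
  rw [← heq] at h1
  rw [heq] at h2
  rw [selfval hlam (hs u hu)] at h1
  rw [selfval hlam (hs u' hu')] at h2
  linarith

lemma main_gradient (hlam : lam ≠ 0) (hΩ : IsOpen Ω)
    (hf : ContDiffOn ℝ (⊤ : ℕ∞) f Ω)
    (hH : ∀ u ∈ Ω, ∀ w : EuclideanSpace ℝ (Fin d), w ≠ 0 →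
      0 < ⟪fderiv ℝ (gradient fun z => (1 / lam) * (Real.exp (lam * f z) - 1)) u w, w⟫)
    (hs : ∀ u ∈ Ω, 0 < 1 - lam * ⟪gradient f u, u⟫)
    {g : EuclideanSpace ℝ (Fin d) → ℝ}
    (hgval : ∀ u ∈ Ω, g (lamGrad lam f u) =
      -(1 / lam) * Real.log (1 - lam * ⟪gradient f u, u⟫) - f u)
    {u₀ : EuclideanSpace ℝ (Fin d)} (hu₀ : u₀ ∈ Ω) :
    HasGradientAt g ((1 - lam * ⟪gradient f u₀, u₀⟫) • u₀) (lamGrad lam f u₀) := by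
  set F : EuclideanSpace ℝ (Fin d) → ℝ := fun z => (1 / lam) * (Real.exp (lam * f z) - 1)
    with hFdef
  have hFCD : ContDiffOn ℝ (⊤ : ℕ∞) F Ω :=
    contDiffOn_const.mul (((contDiffOn_const.mul hf).exp).sub contDiffOn_const)
  set b := gradient F with hbdef
  have hfd : ∀ z ∈ Ω, HasGradientAt f (gradient f z) z := fun z hz =>
    ((hf.contDiffAt (hΩ.mem_nhds hz)).differentiableAt (by simp)).hasGradientAt
  have hgradF : ∀ z ∈ Ω, b z = Real.exp (lam * f z) • gradient f z := fun z hz =>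
    (hasGradientAt_Flam hlam (hfd z hz)).gradient
  have hFd : ∀ z ∈ Ω, HasGradientAt F (b z) z := fun z hz =>
    ((hFCD.contDiffAt (hΩ.mem_nhds hz)).differentiableAt (by simp)).hasGradientAt
  set σ : EuclideanSpace ℝ (Fin d) → ℝ := fun u => 1 + lam * F u - lam * ⟪b u, u⟫ with hσdef
  have hFexp : ∀ u, 1 + lam * F u = Real.exp (lam * f u) := by
    intro u
    rw [hFdef]
    field_simp
    ring
  have hσeq : ∀ u ∈ Ω, σ u = Real.exp (lam * f u) * (1 - lam * ⟪gradient f u, u⟫) := by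
    intro u hu
    rw [hσdef]
    simp only []
    rw [hgradF u hu, real_inner_smul_left]
    have := hFexp u
    generalize hX : ⟪gradient f u, u⟫_ℝ = X at *
    nlinarith [this]
  have hσpos : ∀ u ∈ Ω, 0 < σ u := fun u hu => by
    rw [hσeq u hu]; exact mul_pos (Real.exp_pos _) (hs u hu)
  set V : EuclideanSpace ℝ (Fin d) → EuclideanSpace ℝ (Fin d) :=
    fun u => (σ u)⁻¹ • b u with hVdef
  have hVeq : ∀ u ∈ Ω, V u = lamGrad lam f u := by
    intro u hu
    rw [hVdef]
    simp only []
    rw [hσeq u hu, hgradF u hu, lamGrad, smul_smul]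
    congr 1
    have he := Real.exp_pos (lam * f u)
    rw [mul_inv, mul_comm ((Real.exp (lam * f u))⁻¹), mul_assoc,
      inv_mul_cancel₀ (ne_of_gt he), mul_one]
  -- smoothness of V on Ω
  have hbCD : ContDiffOn ℝ (⊤ : ℕ∞) b Ω := gradient_contDiffOn hΩ hFCD
  have hσCD : ContDiffOn ℝ (⊤ : ℕ∞) σ Ω :=
    (contDiffOn_const.add (contDiffOn_const.mul hFCD)).sub
      (contDiffOn_const.mul (ContDiffOn.inner ℝ hbCD contDiffOn_id))
  have hVCD : ContDiffOn ℝ (⊤ : ℕ∞) V Ω :=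
    (hσCD.inv fun u hu => ne_of_gt (hσpos u hu)).smul hbCD
  -- derivative of V at u₀
  have hbd : HasFDerivAt b (fderiv ℝ b u₀) u₀ :=
    ((hbCD.contDiffAt (hΩ.mem_nhds hu₀)).differentiableAt (by simp)).hasFDerivAt
  set H := fderiv ℝ b u₀ with hHdef
  have hFd₀ : HasFDerivAt F (toDual ℝ _ (b u₀)) u₀ := (hFd u₀ hu₀).hasFDerivAt
  have hinner := HasFDerivAt.inner ℝ hbd (hasFDerivAt_id u₀)
  have hσd := ((hFd₀.const_mul lam).const_add 1).sub (hinner.const_mul lam)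
  have hσ0 : σ u₀ ≠ 0 := ne_of_gt (hσpos u₀ hu₀)
  have hinv := (hasDerivAt_inv hσ0).comp_hasFDerivAt u₀ hσd
  have hVd0 := hinv.smul hbd
  set s₀ := 1 - lam * ⟪gradient f u₀, u₀⟫ with hs₀def
  have hs₀ : 0 < s₀ := hs u₀ hu₀
  set a₀ := gradient f u₀ with ha₀def
  set L : EuclideanSpace ℝ (Fin d) →L[ℝ] EuclideanSpace ℝ (Fin d) :=
    (σ u₀)⁻¹ • H + ContinuousLinearMap.smulRight
      ((lam * ((σ u₀) ^ 2)⁻¹) • ((innerSL ℝ u₀).comp H)) (b u₀) with hLdef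
  have hLapp : ∀ w, L w = (σ u₀)⁻¹ • H w + (lam * ((σ u₀) ^ 2)⁻¹ * ⟪u₀, H w⟫) • b u₀ := by
    intro w
    rw [hLdef]
    simp [ContinuousLinearMap.smulRight_apply, ContinuousLinearMap.smul_apply,
      ContinuousLinearMap.comp_apply, innerSL_apply_apply]
  have hVdL : HasFDerivAt V L u₀ := by
    refine hVd0.congr_fderiv (Eq.symm ?_)
    refine ContinuousLinearMap.ext fun w => ?_
    rw [hLapp]
    simp only [ContinuousLinearMap.add_apply, ContinuousLinearMap.smul_apply,
      ContinuousLinearMap.smulRight_apply, ContinuousLinearMap.comp_apply,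
      ContinuousLinearMap.coe_smul', Pi.smul_apply, ContinuousLinearMap.sub_apply,
      ContinuousLinearMap.prod_apply, ContinuousLinearMap.id_apply,
      fderivInnerCLM_apply, toDual_apply_apply, smul_eq_mul, Function.comp_apply, id_eq]
    rw [real_inner_comm ((fderiv ℝ b u₀) w) u₀]
    match_scalars <;> ring
  -- injectivity of L
  have hLinj : Function.Injective L := by
    have hker : ∀ w, L w = 0 → w = 0 := by
      intro w hw
      by_contra hw0
      rw [hLapp] at hw
      set k := lam * ((σ u₀) ^ 2)⁻¹ * ⟪u₀, H w⟫ with hkdef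
      have hHw : H w = (-(σ u₀) * k) • b u₀ := by
        have h1 : (σ u₀)⁻¹ • H w = -(k • b u₀) := eq_neg_of_add_eq_zero_left hw
        have h2 := congrArg (fun z => (σ u₀) • z) h1
        simp only [smul_smul, smul_neg] at h2
        rw [mul_inv_cancel₀ hσ0, one_smul] at h2
        rw [h2]
        module
      have hiHw : ⟪u₀, H w⟫ = (-(σ u₀) * k) * ⟪u₀, b u₀⟫ := by
        rw [hHw, real_inner_smul_right]
      have hexp := hFexp u₀
      have hσsum : σ u₀ + lam * ⟪b u₀, u₀⟫ = Real.exp (lam * f u₀) := by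
        rw [hσdef]
        simp only []
        linarith [hFexp u₀]
      have hk0 : k = 0 := by
        rw [hiHw] at hkdef
        have hinner_comm : ⟪u₀, b u₀⟫_ℝ = ⟪b u₀, u₀⟫_ℝ := real_inner_comm _ _
        rw [hinner_comm] at hkdef
        have hepos : 0 < Real.exp (lam * f u₀) := Real.exp_pos _
        generalize hB : ⟪b u₀, u₀⟫_ℝ = B at hkdef hσsum
        have h3 : k * (σ u₀) ^ 2 = lam * ((-(σ u₀) * k) * B) := by
          have h3' := congrArg (fun z => z * (σ u₀) ^ 2) hkdef
          beta_reduce at h3'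
          rw [show (lam * ((σ u₀) ^ 2)⁻¹ * (-(σ u₀) * k * B)) * (σ u₀) ^ 2 =
            (lam * ((-(σ u₀) * k) * B)) * (((σ u₀) ^ 2)⁻¹ * (σ u₀) ^ 2) from by ring,
            inv_mul_cancel₀ (pow_ne_zero 2 hσ0), mul_one] at h3'
          exact h3'
        have h4 : k * (σ u₀) * (σ u₀ + lam * B) = 0 := by linear_combination h3
        rw [hσsum] at h4
        rcases mul_eq_zero.mp h4 with h5 | h5
        · rcases mul_eq_zero.mp h5 with h6 | h6
          · exact h6
          · exact absurd h6 hσ0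
        · exact absurd h5 (ne_of_gt hepos)
      rw [hk0, mul_zero, zero_smul] at hHw
      have hcontra := hH u₀ hu₀ w hw0
      rw [hHw, inner_zero_left] at hcontra
      exact lt_irrefl 0 hcontra
    intro w₁ w₂ h12
    have h0 := hker (w₁ - w₂) (by rw [map_sub, h12, sub_self])
    exact sub_eq_zero.mp h0
  -- inverse function theorem
  obtain ⟨L'', hL''coe⟩ : ∃ e : EuclideanSpace ℝ (Fin d) ≃L[ℝ] EuclideanSpace ℝ (Fin d),
      (e : EuclideanSpace ℝ (Fin d) →L[ℝ] EuclideanSpace ℝ (Fin d)) = L := by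
    refine ⟨(LinearEquiv.ofInjectiveEndo (L : _ →ₗ[ℝ] _) hLinj).toContinuousLinearEquiv, ?_⟩
    ext w
    rfl
  have hVstrict : HasStrictFDerivAt V (L'' :
      EuclideanSpace ℝ (Fin d) →L[ℝ] EuclideanSpace ℝ (Fin d)) u₀ := by
    rw [hL''coe]
    exact (hVCD.contDiffAt (hΩ.mem_nhds hu₀)).hasStrictFDerivAt' hVdL (by simp)
  set v₀ := lamGrad lam f u₀ with hv₀def
  have hVu₀ : V u₀ = v₀ := hVeq u₀ hu₀
  set T := hVstrict.localInverse V L'' u₀ with hTdef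
  have hTv₀ : T v₀ = u₀ := by rw [← hVu₀]; exact hVstrict.localInverse_apply_image
  have hTd : HasStrictFDerivAt T (L''.symm :
      EuclideanSpace ℝ (Fin d) →L[ℝ] EuclideanSpace ℝ (Fin d)) v₀ := by
    rw [← hVu₀]; exact hVstrict.to_localInverse
  have hTcont : ContinuousAt T v₀ := by rw [← hVu₀]; exact hVstrict.localInverse_continuousAt
  have hright : ∀ᶠ v in nhds v₀, V (T v) = v := by
    rw [← hVu₀]; exact hVstrict.eventually_right_inverse
  have hTΩ : ∀ᶠ v in nhds v₀, T v ∈ Ω :=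
    hTcont (by rw [hTv₀]; exact hΩ.mem_nhds hu₀)
  have hgev : g =ᶠ[nhds v₀] fun v => (1 / lam) * Real.log (1 + lam * ⟪T v, v⟫) - f (T v) := by
    filter_upwards [hTΩ, hright] with v h1 h2
    have h5 : lamGrad lam f (T v) = v := by rw [← hVeq _ h1]; exact h2
    have h6 := hgval (T v) h1
    rw [h5] at h6
    have h7 := selfval hlam (hs _ h1)
    rw [h5] at h7
    rw [h6]
    exact h7.symm
  -- derivative of the local formula at v₀
  have hTd' : HasFDerivAt T (L''.symm :
      EuclideanSpace ℝ (Fin d) →L[ℝ] EuclideanSpace ℝ (Fin d)) v₀ := hTd.hasFDerivAt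
  have hm := ((HasFDerivAt.inner ℝ hTd' (hasFDerivAt_id v₀)).const_mul lam).const_add 1
  have hm₀ : 1 + lam * ⟪u₀, v₀⟫ = s₀⁻¹ := by
    rw [hv₀def]
    exact one_add_self hlam hs₀
  have hm₀ne : 1 + lam * ⟪T v₀, v₀⟫ ≠ 0 := by
    rw [hTv₀, hm₀]
    exact inv_ne_zero (ne_of_gt hs₀)
  have hlog := (Real.hasDerivAt_log hm₀ne).comp_hasFDerivAt v₀ hm
  have hfu₀ : HasFDerivAt f (toDual ℝ (EuclideanSpace ℝ (Fin d)) a₀) (T v₀) := by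
    rw [hTv₀]
    exact (hfd u₀ hu₀).hasFDerivAt
  have hfT := hfu₀.comp v₀ hTd'
  have hG0 := (hlog.const_mul (1 / lam)).sub hfT
  have hv₀' : v₀ = s₀⁻¹ • a₀ := by rw [hv₀def, lamGrad]
  have hG : HasGradientAt g (s₀ • u₀) v₀ := by
    rw [hasGradientAt_iff_hasFDerivAt]
    have hgd := hG0.congr_of_eventuallyEq hgev
    refine hgd.congr_fderiv (Eq.symm ?_)
    refine ContinuousLinearMap.ext fun w => ?_
    simp only [ContinuousLinearMap.sub_apply, ContinuousLinearMap.smul_apply,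
      ContinuousLinearMap.comp_apply, ContinuousLinearMap.coe_smul', Pi.smul_apply,
      ContinuousLinearMap.add_apply, ContinuousLinearMap.prod_apply,
      ContinuousLinearMap.id_apply, fderivInnerCLM_apply, toDual_apply_apply,
      smul_eq_mul, Function.comp_apply, id_eq, hTv₀]
    rw [real_inner_smul_left]
    rw [show (1 + lam * ⟪u₀, v₀⟫_ℝ)⁻¹ = s₀ from by rw [hm₀, inv_inv]]
    rw [hv₀', real_inner_smul_right, real_inner_comm a₀ ((L''.symm :
      EuclideanSpace ℝ (Fin d) →L[ℝ] EuclideanSpace ℝ (Fin d)) w)]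
    generalize ⟪u₀, w⟫_ℝ = X
    generalize ⟪(L''.symm : EuclideanSpace ℝ (Fin d) →L[ℝ] EuclideanSpace ℝ (Fin d)) w, a₀⟫_ℝ = Y
    have hs₀ne : s₀ ≠ 0 := ne_of_gt hs₀
    field_simp
    ring
  rw [hv₀def] at hG
  exact hG

end Key


/-- For a regular `c_λ`-convex function `f` on `Ω`, the conjugate `f^{c_λ}` is
(real-valued and) differentiable on `Ω' = ∇^{c_λ} f(Ω)`, satisfies `1 − λ ∇f^{c_λ}(v)·v > 0`
there, and its λ-gradient `v ↦ ∇f^{c_λ}(v)/(1 − λ ∇f^{c_λ}(v)·v)` inverts `∇^{c_λ} f`. -/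
theorem lamGrad_conj_inverse {d : ℕ} (lam : ℝ) (hlam : lam ≠ 0)
    (Ω : Set (EuclideanSpace ℝ (Fin d))) (f : EuclideanSpace ℝ (Fin d) → ℝ)
    (hreg : IsRegularCConvex lam Ω f) :
    ∃ g : EuclideanSpace ℝ (Fin d) → ℝ,
      (∀ v ∈ lamGrad lam f '' Ω, ((g v : ℝ) : EReal) = lamConj lam Ω f v) ∧
      (∀ v ∈ lamGrad lam f '' Ω, DifferentiableAt ℝ g v ∧
        0 < 1 - lam * ⟪gradient g v, v⟫) ∧
      ∀ u ∈ Ω, lamGrad lam g (lamGrad lam f u) = u := by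
  classical
  obtain ⟨hnON, hΩ, hconv, hf, hH, hs⟩ := hreg
  have hinj : ∀ u ∈ Ω, ∀ u' ∈ Ω, lamGrad lam f u = lamGrad lam f u' → u = u' :=
    fun u hu u' hu' h => lamGrad_injOn hlam hΩ hconv hf hH hs hu hu' h
  set g : EuclideanSpace ℝ (Fin d) → ℝ := fun v =>
    if h : ∃ u, u ∈ Ω ∧ lamGrad lam f u = v then
      -(1 / lam) * Real.log (1 - lam * ⟪gradient f h.choose, h.choose⟫) - f h.choose
    else 0 with hgdef
  have hgval : ∀ u ∈ Ω, g (lamGrad lam f u) =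
      -(1 / lam) * Real.log (1 - lam * ⟪gradient f u, u⟫) - f u := by
    intro u hu
    have hex : ∃ u', u' ∈ Ω ∧ lamGrad lam f u' = lamGrad lam f u := ⟨u, hu, rfl⟩
    have h2 : hex.choose = u := hinj _ hex.choose_spec.1 _ hu hex.choose_spec.2
    have h3 : g (lamGrad lam f u) = -(1 / lam) *
        Real.log (1 - lam * ⟪gradient f hex.choose, hex.choose⟫) - f hex.choose := by
      rw [hgdef]
      exact dif_pos hex
    rw [h3, h2]
  have hmain : ∀ u ∈ Ω, HasGradientAt g ((1 - lam * ⟪gradient f u, u⟫) • u)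
      (lamGrad lam f u) := fun u hu => main_gradient hlam hΩ hf hH hs hgval hu
  have hkey2 : ∀ u ∈ Ω, 1 - lam * ⟪gradient g (lamGrad lam f u), lamGrad lam f u⟫ =
      1 - lam * ⟪gradient f u, u⟫ := by
    intro u hu
    rw [(hmain u hu).gradient, real_inner_smul_left]
    have h5 := one_add_self hlam (hs u hu)
    have hsu := hs u hu
    set s := 1 - lam * ⟪gradient f u, u⟫ with hsdef
    have h6 : lam * ⟪u, lamGrad lam f u⟫ = s⁻¹ - 1 := by rw [← h5]; ring
    rw [show lam * (s * ⟪u, lamGrad lam f u⟫) =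
      s * (lam * ⟪u, lamGrad lam f u⟫) from by ring, h6]
    have hsne : s ≠ 0 := ne_of_gt hsu
    field_simp
    ring
  refine ⟨g, ?_, ?_, ?_⟩
  · rintro v ⟨u, hu, rfl⟩
    rw [hgval u hu, lamConj_eq hlam hΩ hconv hf hH hu (hs u hu)]
  · rintro v ⟨u, hu, rfl⟩
    exact ⟨(hmain u hu).differentiableAt, by rw [hkey2 u hu]; exact hs u hu⟩
  · intro u hu
    show (1 - lam * ⟪gradient g (lamGrad lam f u), lamGrad lam f u⟫)⁻¹ •
      gradient g (lamGrad lam f u) = u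
    rw [hkey2 u hu, (hmain u hu).gradient, smul_smul,
      inv_mul_cancel₀ (ne_of_gt (hs u hu)), one_smul]
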